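/- Let n ≥ 1, t_out ≥ 1, let Σ be a deterministic symmetric positive semidefinite n×n matrix, and let E_out = (1/t_out)·√Σ X Xᵀ √Σ where the t_out columns of X are i.i.d. copies of a rotationally invariant random vector ξ in ℝⁿ with E[ξξᵀ] = Iₙ and E[‖ξ‖⁴] < ∞; set γ = E[‖ξ‖⁴]/(n(n+2)). Let V be a random n×n orthogonal matrix independent of X. Then E[τ(Diag(Vᵀ E_out V)²)] = ((t_out − 1)/t_out + 3γ/t_out) · E[τ(Diag(Vᵀ Σ V)²)]. -/

import Mathlib

open MeasureTheory ProbabilityTheory Matrix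

/-- Normalized trace `τ(A) = (1/n)·Tr(A)`. -/
noncomputable def tau (n : ℕ) (A : Matrix (Fin n) (Fin n) ℝ) : ℝ := (1 / (n : ℝ)) * A.trace

/-- `Diag(A)`: the diagonal matrix obtained from `A` by zeroing out off-diagonal entries. -/
def diagPart (n : ℕ) (A : Matrix (Fin n) (Fin n) ℝ) : Matrix (Fin n) (Fin n) ℝ :=
  Matrix.diagonal A.diag

/-- Matrices carry the product measurable structure. -/
instance matrixMeasurableSpace {m k α : Type*} [MeasurableSpace α] :
    MeasurableSpace (Matrix m k α) :=
  inferInstanceAs (MeasurableSpace (m → k → α))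

set_option linter.unusedSectionVars false
set_option maxHeartbeats 2000000

lemma sum_if_two {ι : Type*} [Fintype ι] [DecidableEq ι] {z0 z1 : ι} (h : z0 ≠ z1)
    (f g : ι → ℝ) :
    ∑ k, (if k = z0 then f k else if k = z1 then g k else 0) = f z0 + g z1 := by
  have key : ∀ k, (if k = z0 then f k else if k = z1 then g k else 0)
      = (if k = z0 then f k else 0) + (if k = z1 then g k else 0) := by
    intro k; split_ifs with h1 h2 <;> simp_all
  simp [key, Finset.sum_add_distrib, Finset.sum_ite_eq']

section cov2
variable {Ω : Type*} [MeasurableSpace Ω] {μ : Measure Ω} [IsProbabilityMeasure μ]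
variable {n : ℕ} {ξ : Ω → Fin n → ℝ}

lemma meas_mono4 (hξ : Measurable ξ) (a b c d : Fin n) :
    Measurable (fun ω => ξ ω a * ξ ω b * ξ ω c * ξ ω d) :=
  ((((measurable_pi_apply a).comp hξ).mul ((measurable_pi_apply b).comp hξ)).mul
    ((measurable_pi_apply c).comp hξ)).mul ((measurable_pi_apply d).comp hξ)

lemma abs_mono4_le (w : Fin n → ℝ) (a b c d : Fin n) :
    |w a * w b * w c * w d| ≤ (∑ i, w i ^ 2) ^ 2 := by
  set s := ∑ i, w i ^ 2 with hs
  have hs0 : 0 ≤ s := Finset.sum_nonneg fun i _ => sq_nonneg _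
  have ha : w a ^ 2 ≤ s := Finset.single_le_sum (f := fun j => w j ^ 2) (fun j _ => sq_nonneg _) (Finset.mem_univ a)
  have hb : w b ^ 2 ≤ s := Finset.single_le_sum (f := fun j => w j ^ 2) (fun j _ => sq_nonneg _) (Finset.mem_univ b)
  have hc : w c ^ 2 ≤ s := Finset.single_le_sum (f := fun j => w j ^ 2) (fun j _ => sq_nonneg _) (Finset.mem_univ c)
  have hd : w d ^ 2 ≤ s := Finset.single_le_sum (f := fun j => w j ^ 2) (fun j _ => sq_nonneg _) (Finset.mem_univ d)
  have h1 : w a ^ 2 * w b ^ 2 ≤ s * s := mul_le_mul ha hb (sq_nonneg _) hs0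
  have h2 : w c ^ 2 * w d ^ 2 ≤ s * s := mul_le_mul hc hd (sq_nonneg _) hs0
  rw [abs_le]
  constructor <;> nlinarith [sq_nonneg (w a * w b - w c * w d), sq_nonneg (w a * w b + w c * w d)]

lemma abs_mono2_le (w : Fin n → ℝ) (a b : Fin n) :
    |w a * w b| ≤ 1 + (∑ i, w i ^ 2) ^ 2 := by
  set s := ∑ i, w i ^ 2 with hs
  have hs0 : 0 ≤ s := Finset.sum_nonneg fun i _ => sq_nonneg _
  have ha : w a ^ 2 ≤ s := Finset.single_le_sum (f := fun j => w j ^ 2) (fun j _ => sq_nonneg _) (Finset.mem_univ a)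
  have hb : w b ^ 2 ≤ s := Finset.single_le_sum (f := fun j => w j ^ 2) (fun j _ => sq_nonneg _) (Finset.mem_univ b)
  rw [abs_le]
  constructor <;> nlinarith [sq_nonneg (w a - w b), sq_nonneg (w a + w b), sq_nonneg (s - 1), sq_nonneg (s + 1)]

lemma integrable_mono4 (hξ : Measurable ξ)
    (hmom4 : Integrable (fun ω => (∑ i, ξ ω i ^ 2) ^ 2) μ) (a b c d : Fin n) :
    Integrable (fun ω => ξ ω a * ξ ω b * ξ ω c * ξ ω d) μ :=
  hmom4.mono' (meas_mono4 hξ a b c d).aestronglyMeasurable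
    (ae_of_all _ fun ω => by rw [Real.norm_eq_abs]; exact abs_mono4_le (ξ ω) a b c d)

lemma integrable_mono2 (hξ : Measurable ξ)
    (hmom4 : Integrable (fun ω => (∑ i, ξ ω i ^ 2) ^ 2) μ) (a b : Fin n) :
    Integrable (fun ω => ξ ω a * ξ ω b) μ := by
  have hg : Integrable (fun ω => 1 + (∑ i, ξ ω i ^ 2) ^ 2) μ := by
    simpa using (integrable_const (1:ℝ)).add hmom4
  exact hg.mono' (((measurable_pi_apply a).comp hξ).mul
      ((measurable_pi_apply b).comp hξ)).aestronglyMeasurable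
    (ae_of_all _ fun ω => by rw [Real.norm_eq_abs]; exact abs_mono2_le (ξ ω) a b)


lemma int_comp_orth (hξ : Measurable ξ)
    (hrot : ∀ O : Matrix (Fin n) (Fin n) ℝ, Oᵀ * O = 1 →
      Measure.map (fun ω => O.mulVec (ξ ω)) μ = Measure.map ξ μ)
    (O : Matrix (Fin n) (Fin n) ℝ) (hO : Oᵀ * O = 1)
    (f : (Fin n → ℝ) → ℝ) (hf : Measurable f) :
    ∫ ω, f (O.mulVec (ξ ω)) ∂μ = ∫ ω, f (ξ ω) ∂μ := by
  have h1 : Measurable fun x : Fin n → ℝ => O.mulVec x :=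
    (LinearMap.continuous_of_finiteDimensional (Matrix.mulVecLin O)).measurable
  calc ∫ ω, f (O.mulVec (ξ ω)) ∂μ
      = ∫ x, f x ∂(Measure.map (fun ω => O.mulVec (ξ ω)) μ) :=
        (integral_map (h1.comp hξ).aemeasurable hf.aestronglyMeasurable).symm
    _ = ∫ x, f x ∂(Measure.map ξ μ) := by rw [hrot O hO]
    _ = ∫ ω, f (ξ ω) ∂μ := integral_map hξ.aemeasurable hf.aestronglyMeasurable

lemma Modd (hξ : Measurable ξ)
    (hrot : ∀ O : Matrix (Fin n) (Fin n) ℝ, Oᵀ * O = 1 →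
      Measure.map (fun ω => O.mulVec (ξ ω)) μ = Measure.map ξ μ)
    (a b c d k : Fin n)
    (hodd : Odd ((if a = k then 1 else 0) + (if b = k then 1 else 0)
      + (if c = k then 1 else 0) + (if d = k then 1 else 0) : ℕ)) :
    ∫ ω, ξ ω a * ξ ω b * ξ ω c * ξ ω d ∂μ = 0 := by
  classical
  set g : Fin n → ℝ := fun i => if i = k then -1 else 1 with hg
  have hgsq : ∀ i, g i * g i = 1 := by intro i; simp only [hg]; split_ifs <;> norm_num
  have hO : (Matrix.diagonal g)ᵀ * Matrix.diagonal g = 1 := by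
    rw [Matrix.diagonal_transpose, Matrix.diagonal_mul_diagonal]
    have : (fun i => g i * g i) = fun _ => (1:ℝ) := funext hgsq
    rw [this, Matrix.diagonal_one]
  set f : (Fin n → ℝ) → ℝ := fun x => x a * x b * x c * x d with hf
  have hfm : Measurable f := by
    exact ((((measurable_pi_apply a)).mul (measurable_pi_apply b)).mul
      (measurable_pi_apply c)).mul (measurable_pi_apply d)
  have key : ∀ x : Fin n → ℝ, f ((Matrix.diagonal g).mulVec x) = - f x := by
    intro x
    have hprod : g a * g b * g c * g d = -1 := by
      simp only [hg]
      split_ifs at hodd ⊢ <;> simp_all [Nat.odd_iff]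
    simp only [hf, Matrix.mulVec_diagonal]
    linear_combination (x a * x b * x c * x d) * hprod
  have := int_comp_orth (μ := μ) hξ hrot (Matrix.diagonal g) hO f hfm
  simp only [key] at this
  rw [integral_neg] at this
  have h2 : ∫ ω, f (ξ ω) ∂μ = 0 := by linarith
  simpa [hf] using h2

lemma Mperm (hξ : Measurable ξ)
    (hrot : ∀ O : Matrix (Fin n) (Fin n) ℝ, Oᵀ * O = 1 →
      Measure.map (fun ω => O.mulVec (ξ ω)) μ = Measure.map ξ μ)
    (σ : Equiv.Perm (Fin n)) (a b c d : Fin n) :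
    ∫ ω, ξ ω (σ a) * ξ ω (σ b) * ξ ω (σ c) * ξ ω (σ d) ∂μ
      = ∫ ω, ξ ω a * ξ ω b * ξ ω c * ξ ω d ∂μ := by
  classical
  set P : Matrix (Fin n) (Fin n) ℝ := Matrix.of fun i j => if j = σ i then 1 else 0 with hP
  have hmv : ∀ (x : Fin n → ℝ) i, P.mulVec x i = x (σ i) := by
    intro x i
    simp only [Matrix.mulVec, dotProduct, hP, Matrix.of_apply]
    simp [Finset.sum_ite_eq']
  have hO : Pᵀ * P = 1 := by
    ext i j
    simp only [Matrix.mul_apply, Matrix.transpose_apply, hP, Matrix.of_apply, Matrix.one_apply]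
    rw [← Equiv.sum_comp σ.symm (fun k => (if i = σ k then (1:ℝ) else 0) * (if j = σ k then 1 else 0))]
    simp only [Equiv.apply_symm_apply]
    have key : ∀ k, (if i = k then (1:ℝ) else 0) * (if j = k then 1 else 0)
        = if k = i then (if i = j then (1:ℝ) else 0) else 0 := by
      intro k
      rcases eq_or_ne k i with rfl | hki
      · rcases eq_or_ne k j with rfl | hij
        · simp
        · simp [hij, Ne.symm hij]
      · simp [hki, Ne.symm hki]
    rw [Finset.sum_congr rfl fun k _ => key k, Finset.sum_ite_eq']
    simp
  set f : (Fin n → ℝ) → ℝ := fun x => x a * x b * x c * x d with hf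
  have hfm : Measurable f :=
    ((((measurable_pi_apply a)).mul (measurable_pi_apply b)).mul
      (measurable_pi_apply c)).mul (measurable_pi_apply d)
  have := int_comp_orth (μ := μ) hξ hrot P hO f hfm
  simp only [hf, hmv] at this
  exact this



lemma meas_pi4 (a b c d : Fin n) :
    Measurable (fun x : Fin n → ℝ => x a * x b * x c * x d) :=
  (((measurable_pi_apply a).mul (measurable_pi_apply b)).mul
    (measurable_pi_apply c)).mul (measurable_pi_apply d)

lemma Mrot (hξ : Measurable ξ)
    (hrot : ∀ O : Matrix (Fin n) (Fin n) ℝ, Oᵀ * O = 1 →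
      Measure.map (fun ω => O.mulVec (ξ ω)) μ = Measure.map ξ μ)
    (hmom4 : Integrable (fun ω => (∑ i, ξ ω i ^ 2) ^ 2) μ)
    (z0 z1 : Fin n) (hz01 : z0 ≠ z1) :
    ∫ ω, ξ ω z0 * ξ ω z0 * ξ ω z0 * ξ ω z0 ∂μ
      = 3 * ∫ ω, ξ ω z0 * ξ ω z0 * ξ ω z1 * ξ ω z1 ∂μ := by
  classical
  set r : ℝ := (Real.sqrt 2)⁻¹ with hrdef
  have hr : r * r = 1/2 := by
    rw [hrdef, ← mul_inv, Real.mul_self_sqrt (by norm_num : (0:ℝ) ≤ 2)]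
    norm_num
  set G : Matrix (Fin n) (Fin n) ℝ := Matrix.of fun i j =>
    if i = z0 then (if j = z0 then r else if j = z1 then r else 0)
    else if i = z1 then (if j = z0 then -r else if j = z1 then r else 0)
    else if i = j then 1 else 0 with hG
  have hc0 : ∀ k, G k z0 = if k = z0 then r else if k = z1 then -r else 0 := by
    intro k; simp only [hG, Matrix.of_apply]
    split_ifs with h1 h2 <;> simp_all
  have hc1 : ∀ k, G k z1 = if k = z0 then r else if k = z1 then r else 0 := by
    intro k; simp only [hG, Matrix.of_apply]
    split_ifs with h1 h2 <;> simp_all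
  have hci : ∀ i, i ≠ z0 → i ≠ z1 → ∀ k, G k i = if k = i then 1 else 0 := by
    intro i hi0 hi1 k; simp only [hG, Matrix.of_apply]
    split_ifs with h1 h2 <;> simp_all [eq_comm]
  have hO : Gᵀ * G = 1 := by
    ext i j
    have hGt : (Gᵀ * G) i j = ∑ k, G k i * G k j := by
      simp [Matrix.mul_apply, Matrix.transpose_apply]
    rw [hGt]
    by_cases hi0 : i = z0
    · by_cases hj0 : j = z0
      · rw [hi0, hj0]
        have h1 : ∀ k, G k z0 * G k z0 = if k = z0 then r*r else if k = z1 then r*r else 0 := by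
          intro k; rw [hc0]; split_ifs <;> ring
        rw [Finset.sum_congr rfl fun k _ => h1 k, sum_if_two hz01, Matrix.one_apply_eq]
        linarith
      · by_cases hj1 : j = z1
        · rw [hi0, hj1]
          have h1 : ∀ k, G k z0 * G k z1 = if k = z0 then r*r else if k = z1 then -(r*r) else 0 := by
            intro k; rw [hc0, hc1]; split_ifs <;> ring
          rw [Finset.sum_congr rfl fun k _ => h1 k, sum_if_two hz01, Matrix.one_apply_ne hz01]
          ring
        · rw [hi0]
          have h1 : ∀ k, G k z0 * G k j = 0 := by
            intro k; rw [hc0, hci j hj0 hj1]; split_ifs <;> simp_all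
          rw [Finset.sum_congr rfl fun k _ => h1 k, Finset.sum_const_zero,
            Matrix.one_apply_ne (fun h => hj0 h.symm)]
    · by_cases hi1 : i = z1
      · by_cases hj0 : j = z0
        · rw [hi1, hj0]
          have h1 : ∀ k, G k z1 * G k z0 = if k = z0 then r*r else if k = z1 then -(r*r) else 0 := by
            intro k; rw [hc0, hc1]; split_ifs <;> ring
          rw [Finset.sum_congr rfl fun k _ => h1 k, sum_if_two hz01,
            Matrix.one_apply_ne (Ne.symm hz01)]
          ring
        · by_cases hj1 : j = z1
          · rw [hi1, hj1]
            have h1 : ∀ k, G k z1 * G k z1 = if k = z0 then r*r else if k = z1 then r*r else 0 := by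
              intro k; rw [hc1]; split_ifs <;> ring
            rw [Finset.sum_congr rfl fun k _ => h1 k, sum_if_two hz01, Matrix.one_apply_eq]
            linarith
          · rw [hi1]
            have h1 : ∀ k, G k z1 * G k j = 0 := by
              intro k; rw [hc1, hci j hj0 hj1]; split_ifs <;> simp_all
            rw [Finset.sum_congr rfl fun k _ => h1 k, Finset.sum_const_zero,
              Matrix.one_apply_ne (fun h => hj1 h.symm)]
      · by_cases hj0 : j = z0
        · rw [hj0]
          have h1 : ∀ k, G k i * G k z0 = 0 := by
            intro k; rw [hc0, hci i hi0 hi1]; split_ifs <;> simp_all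
          rw [Finset.sum_congr rfl fun k _ => h1 k, Finset.sum_const_zero,
            Matrix.one_apply_ne hi0]
        · by_cases hj1 : j = z1
          · rw [hj1]
            have h1 : ∀ k, G k i * G k z1 = 0 := by
              intro k; rw [hc1, hci i hi0 hi1]; split_ifs <;> simp_all
            rw [Finset.sum_congr rfl fun k _ => h1 k, Finset.sum_const_zero,
              Matrix.one_apply_ne hi1]
          · have key : ∀ k, G k i * G k j = if k = i then (if i = j then (1:ℝ) else 0) else 0 := by
              intro k
              rw [hci i hi0 hi1, hci j hj0 hj1]
              rcases eq_or_ne k i with rfl | hki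
              · rcases eq_or_ne k j with rfl | hij
                · simp
                · simp [hij]
              · simp [hki]
            rw [Finset.sum_congr rfl fun k _ => key k, Finset.sum_ite_eq']
            simp [Matrix.one_apply]
  have hmv : ∀ x : Fin n → ℝ, G.mulVec x z0 = r * x z0 + r * x z1 := by
    intro x
    simp only [Matrix.mulVec, dotProduct]
    have h1 : ∀ j, G z0 j * x j = if j = z0 then r * x j else if j = z1 then r * x j else 0 := by
      intro j; simp only [hG, Matrix.of_apply, if_pos rfl]
      split_ifs <;> ring
    rw [Finset.sum_congr rfl fun j _ => h1 j, sum_if_two hz01]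
  have hrot4 := int_comp_orth hξ hrot G hO (fun x => x z0 * x z0 * x z0 * x z0)
    (meas_pi4 z0 z0 z0 z0)
  simp only [hmv] at hrot4
  have expand : ∀ w0 w1 : ℝ, (r*w0+r*w1) * (r*w0+r*w1) * (r*w0+r*w1) * (r*w0+r*w1)
      = (1/4)*(w0*w0*w0*w0) + (1/4)*(w1*w1*w1*w1) + (3/2)*(w0*w0*w1*w1)
        + (w0*w0*w0*w1) + (w0*w1*w1*w1) := by
    intro w0 w1
    linear_combination ((r*r+1/2)*(w0+w1)^4) * hr
  simp only [expand] at hrot4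
  have i1 : Integrable (fun ω => ξ ω z0 * ξ ω z0 * ξ ω z0 * ξ ω z0) μ :=
    integrable_mono4 hξ hmom4 z0 z0 z0 z0
  have i2 : Integrable (fun ω => ξ ω z1 * ξ ω z1 * ξ ω z1 * ξ ω z1) μ :=
    integrable_mono4 hξ hmom4 z1 z1 z1 z1
  have i3 : Integrable (fun ω => ξ ω z0 * ξ ω z0 * ξ ω z1 * ξ ω z1) μ :=
    integrable_mono4 hξ hmom4 z0 z0 z1 z1
  have i4 : Integrable (fun ω => ξ ω z0 * ξ ω z0 * ξ ω z0 * ξ ω z1) μ :=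
    integrable_mono4 hξ hmom4 z0 z0 z0 z1
  have i5 : Integrable (fun ω => ξ ω z0 * ξ ω z1 * ξ ω z1 * ξ ω z1) μ :=
    integrable_mono4 hξ hmom4 z0 z1 z1 z1
  have j4 : Integrable (fun ω => (1/4)*(ξ ω z0 * ξ ω z0 * ξ ω z0 * ξ ω z0)
      + (1/4)*(ξ ω z1 * ξ ω z1 * ξ ω z1 * ξ ω z1)
      + (3/2)*(ξ ω z0 * ξ ω z0 * ξ ω z1 * ξ ω z1)
      + (ξ ω z0 * ξ ω z0 * ξ ω z0 * ξ ω z1)) μ := by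
    exact (((i1.const_mul (1/4)).add (i2.const_mul (1/4))).add (i3.const_mul (3/2))).add i4
  have j3 : Integrable (fun ω => (1/4)*(ξ ω z0 * ξ ω z0 * ξ ω z0 * ξ ω z0)
      + (1/4)*(ξ ω z1 * ξ ω z1 * ξ ω z1 * ξ ω z1)
      + (3/2)*(ξ ω z0 * ξ ω z0 * ξ ω z1 * ξ ω z1)) μ := by
    exact ((i1.const_mul (1/4)).add (i2.const_mul (1/4))).add (i3.const_mul (3/2))
  have j2 : Integrable (fun ω => (1/4)*(ξ ω z0 * ξ ω z0 * ξ ω z0 * ξ ω z0)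
      + (1/4)*(ξ ω z1 * ξ ω z1 * ξ ω z1 * ξ ω z1)) μ := by
    exact (i1.const_mul (1/4)).add (i2.const_mul (1/4))
  rw [integral_add j4 i5, integral_add j3 i4, integral_add j2 (i3.const_mul (3/2)),
    integral_add (i1.const_mul (1/4)) (i2.const_mul (1/4)),
    integral_const_mul, integral_const_mul, integral_const_mul] at hrot4
  have hperm : ∫ ω, ξ ω z1 * ξ ω z1 * ξ ω z1 * ξ ω z1 ∂μ
      = ∫ ω, ξ ω z0 * ξ ω z0 * ξ ω z0 * ξ ω z0 ∂μ := by
    simpa [Equiv.swap_apply_left] using Mperm hξ hrot (Equiv.swap z0 z1) z0 z0 z0 z0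
  have hodd1 : ∫ ω, ξ ω z0 * ξ ω z0 * ξ ω z0 * ξ ω z1 ∂μ = 0 := by
    apply Modd hξ hrot z0 z0 z0 z1 z1
    simp [hz01, Nat.odd_iff]
  have hodd2 : ∫ ω, ξ ω z0 * ξ ω z1 * ξ ω z1 * ξ ω z1 ∂μ = 0 := by
    apply Modd hξ hrot z0 z1 z1 z1 z0
    simp [hz01, Ne.symm hz01, Nat.odd_iff]
  rw [hperm, hodd1, hodd2] at hrot4
  linarith



variable {Ω : Type*} [MeasurableSpace Ω] {μ : Measure Ω} [IsProbabilityMeasure μ]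
variable {n : ℕ} {ξ : Ω → Fin n → ℝ}

lemma Mtensor (hn : 1 ≤ n) (hξ : Measurable ξ)
    (hrot : ∀ O : Matrix (Fin n) (Fin n) ℝ, Oᵀ * O = 1 →
      Measure.map (fun ω => O.mulVec (ξ ω)) μ = Measure.map ξ μ)
    (hmom4 : Integrable (fun ω => (∑ i, ξ ω i ^ 2) ^ 2) μ)
    (γ : ℝ) (hγ : γ = (∫ ω, (∑ i, ξ ω i ^ 2) ^ 2 ∂μ) / ((n : ℝ) * ((n : ℝ) + 2)))
    (a b c d : Fin n) :
    ∫ ω, ξ ω a * ξ ω b * ξ ω c * ξ ω d ∂μ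
      = γ * ((if a = b then (1:ℝ) else 0) * (if c = d then (1:ℝ) else 0)
           + (if a = c then (1:ℝ) else 0) * (if b = d then (1:ℝ) else 0)
           + (if a = d then (1:ℝ) else 0) * (if b = c then (1:ℝ) else 0)) := by
  classical
  have hn0 : (0:ℝ) < (n:ℝ) := by exact_mod_cast Nat.lt_of_lt_of_le Nat.zero_lt_one hn
  set z0 : Fin n := ⟨0, hn⟩ with hz0def
  -- expansion of the fourth moment of the norm
  have hpt : ∀ ω, (∑ i, ξ ω i ^ 2) ^ 2 = ∑ p, ∑ q, ξ ω p * ξ ω p * ξ ω q * ξ ω q := by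
    intro ω; rw [sq, Finset.sum_mul_sum]
    exact Finset.sum_congr rfl fun p _ => Finset.sum_congr rfl fun q _ => by ring
  have hms : (∫ ω, (∑ i, ξ ω i ^ 2) ^ 2 ∂μ)
      = ∑ p, ∑ q, ∫ ω, ξ ω p * ξ ω p * ξ ω q * ξ ω q ∂μ := by
    have e : (fun ω => (∑ i, ξ ω i ^ 2) ^ 2)
        = fun ω => ∑ p, ∑ q, ξ ω p * ξ ω p * ξ ω q * ξ ω q := funext hpt
    rw [e, integral_finset_sum _ (fun p _ =>
      integrable_finset_sum _ (fun q _ => integrable_mono4 hξ hmom4 p p q q))]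
    exact Finset.sum_congr rfl fun p _ =>
      integral_finset_sum _ (fun q _ => integrable_mono4 hξ hmom4 p p q q)
  have hswap : ∀ a : Fin n, ∫ ω, ξ ω a * ξ ω a * ξ ω a * ξ ω a ∂μ
      = ∫ ω, ξ ω z0 * ξ ω z0 * ξ ω z0 * ξ ω z0 ∂μ := by
    intro a
    simpa [Equiv.swap_apply_left] using Mperm hξ hrot (Equiv.swap z0 a) z0 z0 z0 z0
  by_cases hn2 : 2 ≤ n
  · set z1 : Fin n := ⟨1, by omega⟩ with hz1def
    have hz01 : z0 ≠ z1 := by simp [hz0def, hz1def, Fin.ext_iff]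
    set I0 := ∫ ω, ξ ω z0 * ξ ω z0 * ξ ω z0 * ξ ω z0 ∂μ with hI0
    set d0 := ∫ ω, ξ ω z0 * ξ ω z0 * ξ ω z1 * ξ ω z1 ∂μ with hd0
    have hc3 : I0 = 3 * d0 := Mrot hξ hrot hmom4 z0 z1 hz01
    have hpaird : ∀ a c : Fin n, a ≠ c → ∫ ω, ξ ω a * ξ ω a * ξ ω c * ξ ω c ∂μ = d0 := by
      intro a c hac
      set τ := Equiv.swap z0 a with hτ
      set c' := τ c with hc'
      have hc'0 : c' ≠ z0 := by
        intro h
        have : c = a := by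
          calc c = τ (τ c) := (Equiv.swap_apply_self z0 a c).symm
            _ = τ z0 := by rw [← hc', h]
            _ = a := Equiv.swap_apply_left z0 a
        exact hac this.symm
      set σ := (Equiv.swap z1 c').trans τ with hσ
      have hσ0 : σ z0 = a := by
        rw [hσ, Equiv.trans_apply, Equiv.swap_apply_of_ne_of_ne hz01 (Ne.symm hc'0), hτ,
          Equiv.swap_apply_left]
      have hσ1 : σ z1 = c := by
        rw [hσ, Equiv.trans_apply, Equiv.swap_apply_left, hc', hτ, Equiv.swap_apply_self]
      have := Mperm hξ hrot σ z0 z0 z1 z1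
      rw [hσ0, hσ1] at this
      exact this
    have hval : ∀ p q : Fin n, ∫ ω, ξ ω p * ξ ω p * ξ ω q * ξ ω q ∂μ
        = if p = q then I0 else d0 := by
      intro p q
      by_cases h : p = q
      · rw [if_pos h, h, hswap q]
      · rw [if_neg h]; exact hpaird p q h
    have hm4val : (∫ ω, (∑ i, ξ ω i ^ 2) ^ 2 ∂μ) = (n:ℝ) * ((n:ℝ) + 2) * d0 := by
      rw [hms]
      have hinner : ∀ p : Fin n, (∑ q, ∫ ω, ξ ω p * ξ ω p * ξ ω q * ξ ω q ∂μ)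
          = d0 * (n:ℝ) + (I0 - d0) := by
        intro p
        have e : ∀ q : Fin n, (∫ ω, ξ ω p * ξ ω p * ξ ω q * ξ ω q ∂μ)
            = d0 + (if p = q then I0 - d0 else 0) := by
          intro q; rw [hval p q]; split_ifs <;> ring
        rw [Finset.sum_congr rfl fun q _ => e q, Finset.sum_add_distrib, Finset.sum_const,
          Finset.sum_ite_eq, if_pos (Finset.mem_univ p)]
        simp [Finset.card_univ, nsmul_eq_mul]
        ring
      rw [Finset.sum_congr rfl fun p _ => hinner p, Finset.sum_const, Finset.card_univ]
      simp [nsmul_eq_mul]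
      rw [hc3]; ring
    have hγd : γ = d0 := by
      rw [hγ, hm4val]
      field_simp
    have hquad : ∀ a : Fin n, ∫ ω, ξ ω a * ξ ω a * ξ ω a * ξ ω a ∂μ = 3 * γ := by
      intro a; rw [hswap a, hc3, hγd]
    have hpair : ∀ a c : Fin n, a ≠ c → ∫ ω, ξ ω a * ξ ω a * ξ ω c * ξ ω c ∂μ = γ := by
      intro a c h; rw [hpaird a c h, hγd]
    have hpair2 : ∀ a c : Fin n, a ≠ c → ∫ ω, ξ ω a * ξ ω c * ξ ω a * ξ ω c ∂μ = γ := by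
      intro a c h
      have e : (fun ω => ξ ω a * ξ ω c * ξ ω a * ξ ω c)
          = fun ω => ξ ω a * ξ ω a * ξ ω c * ξ ω c := by funext ω; ring
      rw [e]; exact hpair a c h
    have hpair3 : ∀ a c : Fin n, a ≠ c → ∫ ω, ξ ω a * ξ ω c * ξ ω c * ξ ω a ∂μ = γ := by
      intro a c h
      have e : (fun ω => ξ ω a * ξ ω c * ξ ω c * ξ ω a)
          = fun ω => ξ ω a * ξ ω a * ξ ω c * ξ ω c := by funext ω; ring
      rw [e]; exact hpair a c h
    -- case analysis
    by_cases hab : a = b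
    · by_cases hcd : c = d
      · by_cases hac : a = c
        · subst hab; subst hcd; subst hac
          rw [hquad a]; simp; ring
        · subst hab; subst hcd
          rw [hpair a c hac]
          have hbd : ¬ a = c := hac
          simp [hac]
      · -- a = b, c ≠ d : odd
        subst hab
        by_cases hca : c = a
        · have had : ¬ a = d := fun h => hcd (hca.trans h)
          rw [Modd hξ hrot a a c d d (by simp [had, hcd, Nat.odd_iff])]
          simp [hcd, had]
        · have hac2 : ¬ a = c := fun h => hca h.symm
          have hdc : ¬ d = c := fun h => hcd h.symm
          rw [Modd hξ hrot a a c d c (by simp [hac2, hdc, Nat.odd_iff])]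
          simp [hcd, hac2]
    · by_cases hcd : c = d
      · -- a ≠ b, c = d : odd
        subst hcd
        have hba : ¬ b = a := fun h => hab h.symm
        by_cases hca : c = a
        · have hcb : ¬ c = b := fun h => hab (hca.symm.trans h)
          have hbc : ¬ b = c := fun h => hcb h.symm
          have hac2 : a = c := hca.symm
          rw [Modd hξ hrot a b c c b (by simp [hab, hcb, Nat.odd_iff])]
          simp [hab, hac2, hbc, hcb]
        · have hac2 : ¬ a = c := fun h => hca h.symm
          rw [Modd hξ hrot a b c c a (by simp [hba, hca, Nat.odd_iff])]
          simp [hab, hac2]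
      · -- a ≠ b, c ≠ d
        by_cases hac : a = c
        · by_cases hbd : b = d
          · subst hac; subst hbd
            rw [hpair2 a b hab]
            simp [hab, hcd]
          · -- a = c, b ≠ d : b appears once
            subst hac
            have hba : ¬ b = a := fun h => hab h.symm
            have hdb : ¬ d = b := fun h => hbd h.symm
            rw [Modd hξ hrot a b a d b (by simp [hab, hdb, Nat.odd_iff])]
            simp [hab, hbd, hba]
        · by_cases had : a = d
          · by_cases hbc : b = c
            · subst had; subst hbc
              rw [hpair3 a b hab]
              have hba : ¬ b = a := fun h => hab h.symm
              simp [hab, hba]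
            · subst had
              have hba : ¬ b = a := fun h => hab h.symm
              have hcb : ¬ c = b := fun h => hbc h.symm
              rw [Modd hξ hrot a b c a b (by simp [hab, hcb, Nat.odd_iff])]
              simp [hab, hba, hbc]
          · have hba : ¬ b = a := fun h => hab h.symm
            have hca' : ¬ c = a := fun h => hac h.symm
            have hda : ¬ d = a := fun h => had h.symm
            rw [Modd hξ hrot a b c d a (by simp [hba, hca', hda, Nat.odd_iff])]
            simp [hab, hac, had]
  · -- n = 1
    have hn1 : n = 1 := by omega
    subst hn1
    have hab : a = b := Subsingleton.elim a b
    have hac : a = c := Subsingleton.elim a c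
    have had : a = d := Subsingleton.elim a d
    subst hab; subst hac; subst had
    have e : (fun ω => (∑ i, ξ ω i ^ 2) ^ 2) = fun ω => ξ ω a * ξ ω a * ξ ω a * ξ ω a := by
      funext ω
      have ha0 : a = 0 := Subsingleton.elim a 0
      rw [Fin.sum_univ_one, ha0]; ring
    rw [hγ, e]
    norm_num
end cov2

lemma meas_pi2 {n : ℕ} (a b : Fin n) :
    Measurable (fun x : Fin n → ℝ => x a * x b) :=
  (measurable_pi_apply a).mul (measurable_pi_apply b)

lemma sum_if_diag {t : ℕ} (A B : ℝ) :
    ∑ s : Fin t, ∑ s' : Fin t, (if s = s' then A else B)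
      = (t:ℝ) * A + ((t:ℝ) * (t:ℝ) - (t:ℝ)) * B := by
  have hinner : ∀ s : Fin t, (∑ s' : Fin t, (if s = s' then A else B))
      = B * (t:ℝ) + (A - B) := by
    intro s
    have e : ∀ s' : Fin t, (if s = s' then A else B) = B + (if s = s' then A - B else 0) := by
      intro s'; split_ifs <;> ring
    rw [Finset.sum_congr rfl fun s' _ => e s', Finset.sum_add_distrib, Finset.sum_const,
      Finset.sum_ite_eq, if_pos (Finset.mem_univ s), Finset.card_univ]
    simp [nsmul_eq_mul, mul_comm]
  rw [Finset.sum_congr rfl fun s _ => hinner s, Finset.sum_const, Finset.card_univ]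
  simp [nsmul_eq_mul]
  ring

section collapses
variable {n : ℕ}

lemma collapse1 (U4 : Fin n → Fin n → Fin n → Fin n → ℝ) :
    ∑ a, ∑ b, ∑ c, ∑ d, U4 a b c d * ((if a = b then (1:ℝ) else 0) * (if c = d then 1 else 0))
      = ∑ a, ∑ c, U4 a a c c := by
  refine Finset.sum_congr rfl fun a _ => ?_
  have inner : ∀ b, (∑ c, ∑ d, U4 a b c d * ((if a = b then (1:ℝ) else 0) * (if c = d then 1 else 0)))
      = if a = b then (∑ c, U4 a b c c) else 0 := by
    intro b
    by_cases hab : a = b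
    · subst hab
      have e2 : ∀ c, (∑ d, U4 a a c d * ((if a = a then (1:ℝ) else 0) * (if c = d then 1 else 0)))
          = U4 a a c c := by
        intro c
        have e : ∀ d, U4 a a c d * ((if a = a then (1:ℝ) else 0) * (if c = d then 1 else 0))
            = if c = d then U4 a a c d else 0 := by
          intro d; split_ifs <;> simp_all
        rw [Finset.sum_congr rfl fun d _ => e d, Finset.sum_ite_eq, if_pos (Finset.mem_univ c)]
      rw [Finset.sum_congr rfl fun c _ => e2 c, if_pos rfl]
    · simp [hab]
  rw [Finset.sum_congr rfl fun b _ => inner b, Finset.sum_ite_eq, if_pos (Finset.mem_univ a)]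

lemma collapse2 (U4 : Fin n → Fin n → Fin n → Fin n → ℝ) :
    ∑ a, ∑ b, ∑ c, ∑ d, U4 a b c d * ((if a = c then (1:ℝ) else 0) * (if b = d then 1 else 0))
      = ∑ a, ∑ b, U4 a b a b := by
  refine Finset.sum_congr rfl fun a _ => Finset.sum_congr rfl fun b _ => ?_
  have hd : ∀ c, (∑ d, U4 a b c d * ((if a = c then (1:ℝ) else 0) * (if b = d then 1 else 0)))
      = if a = c then U4 a b c b else 0 := by
    intro c
    by_cases hac : a = c
    · subst hac
      have e : ∀ d, U4 a b a d * ((if a = a then (1:ℝ) else 0) * (if b = d then 1 else 0))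
          = if b = d then U4 a b a d else 0 := by
        intro d; split_ifs <;> simp_all
      rw [Finset.sum_congr rfl fun d _ => e d, Finset.sum_ite_eq, if_pos (Finset.mem_univ b),
        if_pos rfl]
    · simp [hac]
  rw [Finset.sum_congr rfl fun c _ => hd c, Finset.sum_ite_eq, if_pos (Finset.mem_univ a)]

lemma collapse3 (U4 : Fin n → Fin n → Fin n → Fin n → ℝ) :
    ∑ a, ∑ b, ∑ c, ∑ d, U4 a b c d * ((if a = d then (1:ℝ) else 0) * (if b = c then 1 else 0))
      = ∑ a, ∑ b, U4 a b b a := by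
  refine Finset.sum_congr rfl fun a _ => Finset.sum_congr rfl fun b _ => ?_
  have hd : ∀ c, (∑ d, U4 a b c d * ((if a = d then (1:ℝ) else 0) * (if b = c then 1 else 0)))
      = if b = c then U4 a b c a else 0 := by
    intro c
    by_cases hbc : b = c
    · subst hbc
      have e : ∀ d, U4 a b b d * ((if a = d then (1:ℝ) else 0) * (if b = b then 1 else 0))
          = if a = d then U4 a b b d else 0 := by
        intro d; split_ifs <;> simp_all
      rw [Finset.sum_congr rfl fun d _ => e d, Finset.sum_ite_eq, if_pos (Finset.mem_univ a),
        if_pos rfl]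
    · simp [hbc]
  rw [Finset.sum_congr rfl fun c _ => hd c, Finset.sum_ite_eq, if_pos (Finset.mem_univ b)]

lemma sum_sq_expand (α β : Fin n → ℝ) :
    ((∑ p, α p) * (∑ p, α p)) * ((∑ p, β p) * (∑ p, β p))
      = ∑ a, ∑ b, ∑ c, ∑ d, (α a * α b) * (β c * β d) := by
  rw [Finset.sum_mul_sum, Finset.sum_mul_sum, Finset.sum_mul]
  refine Finset.sum_congr rfl fun a _ => ?_
  rw [Finset.sum_mul]
  refine Finset.sum_congr rfl fun b _ => ?_
  rw [Finset.mul_sum]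
  refine Finset.sum_congr rfl fun c _ => ?_
  rw [Finset.mul_sum]

end collapses

lemma tau_diagPart_sq (n : ℕ) (A : Matrix (Fin n) (Fin n) ℝ) :
    tau n ((diagPart n A) ^ 2) = (1 / (n:ℝ)) * ∑ i, (A i i) * (A i i) := by
  simp [tau, diagPart, pow_two, Matrix.diagonal_mul_diagonal, Matrix.trace_diagonal, Matrix.diag]

lemma quadS {n : ℕ} (S R V : Matrix (Fin n) (Fin n) ℝ) (hRS : R * R = S) (hRT : Rᵀ = R)
    (i : Fin n) :
    (Vᵀ * S * V) i i = ∑ p, (R * V) p i * (R * V) p i := by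
  have h : Vᵀ * S * V = (R * V)ᵀ * (R * V) := by
    rw [Matrix.transpose_mul, hRT, ← hRS,
      show Vᵀ * (R * R) = Vᵀ * R * R from (Matrix.mul_assoc _ _ _).symm,
      Matrix.mul_assoc (Vᵀ * R) R V]
  rw [h, Matrix.mul_apply]
  exact Finset.sum_congr rfl fun p _ => by rw [Matrix.transpose_apply]

lemma quadE {n tout : ℕ} (R V : Matrix (Fin n) (Fin n) ℝ) (X : Matrix (Fin n) (Fin tout) ℝ)
    (hRT : Rᵀ = R) (i : Fin n) :
    (Vᵀ * (R * X * Xᵀ * R) * V) i i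
      = ∑ s, (∑ p, (R * V) p i * X p s) * (∑ p, (R * V) p i * X p s) := by
  have h : Vᵀ * (R * X * Xᵀ * R) * V = (Xᵀ * (R * V))ᵀ * (Xᵀ * (R * V)) := by
    rw [Matrix.transpose_mul, Matrix.transpose_mul, Matrix.transpose_transpose, hRT]
    simp only [Matrix.mul_assoc]
  have w : ∀ s : Fin tout, (Xᵀ * (R * V)) s i = ∑ p, (R * V) p i * X p s := by
    intro s
    rw [Matrix.mul_apply]
    exact Finset.sum_congr rfl fun p _ => by rw [Matrix.transpose_apply]; ring
  rw [h, Matrix.mul_apply]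
  exact Finset.sum_congr rfl fun s _ => by rw [Matrix.transpose_apply, w s]


/-- For the test-set sample covariance `E_out = (1/t_out)·√Σ X Xᵀ √Σ` built from rotationally
invariant noise, and a random orthogonal matrix `V` independent of the test noise:
`E[τ(Diag(Vᵀ E_out V)²)] = ((t_out−1)/t_out + 3γ/t_out)·E[τ(Diag(Vᵀ Σ V)²)]`,
with `γ = E[‖ξ‖⁴]/(n(n+2))`. -/
theorem stmt_7 {Ω : Type*} [MeasurableSpace Ω] (μ : Measure Ω) [IsProbabilityMeasure μ]
    (n tout : ℕ) (hn : 1 ≤ n) (htout : 1 ≤ tout)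
    (S R : Matrix (Fin n) (Fin n) ℝ)
    (hS : S.PosSemidef) (hR : R.PosSemidef) (hRS : R * R = S)
    (ξ : Ω → Fin n → ℝ) (hξmeas : Measurable ξ)
    (hrot : ∀ O : Matrix (Fin n) (Fin n) ℝ, Oᵀ * O = 1 →
      Measure.map (fun ω => O.mulVec (ξ ω)) μ = Measure.map ξ μ)
    (hcov : ∀ i j : Fin n, ∫ ω, ξ ω i * ξ ω j ∂μ = if i = j then (1 : ℝ) else 0)
    (hmom4 : Integrable (fun ω => (∑ i, ξ ω i ^ 2) ^ 2) μ)
    (X : Ω → Matrix (Fin n) (Fin tout) ℝ) (hXmeas : Measurable X)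
    (hindep : iIndepFun
      (fun t ω => fun i => X ω i t) μ)
    (hident : ∀ t : Fin tout, IdentDistrib (fun ω => fun i => X ω i t) ξ μ μ)
    (Eout : Ω → Matrix (Fin n) (Fin n) ℝ)
    (hEout : ∀ ω, Eout ω = ((tout : ℝ)⁻¹) • (R * X ω * (X ω)ᵀ * R))
    (V : Ω → Matrix (Fin n) (Fin n) ℝ) (hVmeas : Measurable V)
    (hVorth : ∀ ω, (V ω)ᵀ * V ω = 1)
    (hVX : IndepFun V X μ)
    (γ : ℝ) (hγ : γ = (∫ ω, (∑ i, ξ ω i ^ 2) ^ 2 ∂μ) / ((n : ℝ) * ((n : ℝ) + 2))) :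
    ∫ ω, tau n ((diagPart n ((V ω)ᵀ * Eout ω * V ω)) ^ 2) ∂μ =
      (((tout : ℝ) - 1) / (tout : ℝ) + 3 * γ / (tout : ℝ)) *
        ∫ ω, tau n ((diagPart n ((V ω)ᵀ * S * V ω)) ^ 2) ∂μ := by
  classical
  have hRT : Rᵀ = R := by
    rw [← Matrix.conjTranspose_eq_transpose_of_trivial]; exact hR.1
  have ht0 : (tout:ℝ) ≠ 0 := Nat.cast_ne_zero.mpr (by omega)
  have hn0 : (n:ℝ) ≠ 0 := Nat.cast_ne_zero.mpr (by omega)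
  set u : Ω → Fin n → Fin n → ℝ := fun ω i p => (R * V ω) p i with hu
  -- measurability of the matrix-space functionals
  have hmRV : ∀ p i : Fin n, Measurable (fun v : Matrix (Fin n) (Fin n) ℝ => (R * v) p i) := by
    intro p i
    have e : (fun v : Matrix (Fin n) (Fin n) ℝ => (R * v) p i) = fun v => ∑ q, R p q * v q i := by
      funext v; rw [Matrix.mul_apply]
    rw [e]
    exact Finset.measurable_sum _ fun q _ =>
      measurable_const.mul ((measurable_pi_apply i).comp (measurable_pi_apply q))
  have hmX : ∀ (p : Fin n) (s : Fin tout),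
      Measurable (fun x : Matrix (Fin n) (Fin tout) ℝ => x p s) :=
    fun p s => (measurable_pi_apply s).comp (measurable_pi_apply p)
  have hmF : ∀ (i a b c d : Fin n), Measurable (fun v : Matrix (Fin n) (Fin n) ℝ =>
      (R * v) a i * (R * v) b i * (R * v) c i * (R * v) d i) :=
    fun i a b c d => (((hmRV a i).mul (hmRV b i)).mul (hmRV c i)).mul (hmRV d i)
  have hmG : ∀ (s s' : Fin tout) (a b c d : Fin n),
      Measurable (fun x : Matrix (Fin n) (Fin tout) ℝ => x a s * x b s * x c s' * x d s') :=
    fun s s' a b c d => (((hmX a s).mul (hmX b s)).mul (hmX c s')).mul (hmX d s')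
  -- bounds on u
  set K : ℝ := (∑ p, ∑ q, |R p q|) + 1 with hK
  have hK0 : 0 ≤ K := by
    have : (0:ℝ) ≤ ∑ p, ∑ q, |R p q| :=
      Finset.sum_nonneg fun p _ => Finset.sum_nonneg fun q _ => abs_nonneg _
    rw [hK]; linarith
  have hVb : ∀ ω (p i : Fin n), |V ω p i| ≤ 1 := by
    intro ω p i
    have h1 : ((V ω)ᵀ * V ω) i i = 1 := by rw [hVorth ω]; exact Matrix.one_apply_eq i
    rw [Matrix.mul_apply] at h1
    have e : ∀ k, (V ω)ᵀ i k * V ω k i = (V ω k i)^2 := by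
      intro k; rw [Matrix.transpose_apply]; ring
    rw [Finset.sum_congr rfl fun k _ => e k] at h1
    have h2 : (V ω p i)^2 ≤ ∑ k, (V ω k i)^2 :=
      Finset.single_le_sum (f := fun k => (V ω k i)^2) (fun k _ => sq_nonneg _)
        (Finset.mem_univ p)
    rw [h1] at h2
    exact (sq_le_one_iff_abs_le_one _).mp h2
  have hub : ∀ ω (i p : Fin n), |u ω i p| ≤ K := by
    intro ω i p
    show |(R * V ω) p i| ≤ K
    rw [Matrix.mul_apply]
    calc |∑ q, R p q * V ω q i| ≤ ∑ q, |R p q * V ω q i| := Finset.abs_sum_le_sum_abs _ _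
      _ ≤ ∑ q, |R p q| := Finset.sum_le_sum fun q _ => by
          rw [abs_mul]; exact mul_le_of_le_one_right (abs_nonneg _) (hVb ω q i)
      _ ≤ ∑ p', ∑ q, |R p' q| :=
          Finset.single_le_sum (f := fun p' => ∑ q, |R p' q|)
            (fun p' _ => Finset.sum_nonneg fun q _ => abs_nonneg _) (Finset.mem_univ p)
      _ ≤ K := by rw [hK]; linarith
  have hFabs : ∀ ω (i a b c d : Fin n),
      |u ω i a * u ω i b * u ω i c * u ω i d| ≤ K*K*K*K := by
    intro ω i a b c d
    calc |u ω i a * u ω i b * u ω i c * u ω i d|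
        = |u ω i a| * |u ω i b| * |u ω i c| * |u ω i d| := by
          rw [abs_mul, abs_mul, abs_mul]
      _ ≤ K*K*K*K := by
          gcongr <;> first
            | exact abs_nonneg _
            | exact hub _ _ _
            | exact mul_nonneg (abs_nonneg _) (abs_nonneg _)
            | exact mul_nonneg (mul_nonneg (abs_nonneg _) (abs_nonneg _)) (abs_nonneg _)
  have hintU : ∀ i a b c d : Fin n,
      Integrable (fun ω => u ω i a * u ω i b * u ω i c * u ω i d) μ := by
    intro i a b c d
    have hm : Measurable (fun ω => u ω i a * u ω i b * u ω i c * u ω i d) :=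
      (hmF i a b c d).comp hVmeas
    refine (integrable_const (K*K*K*K)).mono' hm.aestronglyMeasurable
      (ae_of_all _ fun ω => ?_)
    rw [Real.norm_eq_abs]
    exact hFabs ω i a b c d
  set U : Fin n → Fin n → Fin n → Fin n → Fin n → ℝ :=
    fun i a b c d => ∫ ω, u ω i a * u ω i b * u ω i c * u ω i d ∂μ with hU
  have hUsym2 : ∀ i a b, U i a b a b = U i a a b b := by
    intro i a b
    simp only [hU]
    congr 1; funext ω; ring
  have hUsym3 : ∀ i a b, U i a b b a = U i a a b b := by
    intro i a b
    simp only [hU]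
    congr 1; funext ω; ring
  -- column transfers
  have hXint4 : ∀ (s : Fin tout) (a b c d : Fin n),
      Integrable (fun ω => X ω a s * X ω b s * X ω c s * X ω d s) μ := by
    intro s a b c d
    exact ((hident s).comp (meas_pi4 a b c d)).integrable_iff.mpr
      (integrable_mono4 hξmeas hmom4 a b c d)
  have hXeq4 : ∀ (s : Fin tout) (a b c d : Fin n),
      ∫ ω, X ω a s * X ω b s * X ω c s * X ω d s ∂μ
        = ∫ ω, ξ ω a * ξ ω b * ξ ω c * ξ ω d ∂μ :=
    fun s a b c d => ((hident s).comp (meas_pi4 a b c d)).integral_eq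
  have hXint2 : ∀ (s : Fin tout) (a b : Fin n),
      Integrable (fun ω => X ω a s * X ω b s) μ :=
    fun s a b => ((hident s).comp (meas_pi2 a b)).integrable_iff.mpr
      (integrable_mono2 hξmeas hmom4 a b)
  have hXeq2 : ∀ (s : Fin tout) (a b : Fin n),
      ∫ ω, X ω a s * X ω b s ∂μ = if a = b then (1:ℝ) else 0 :=
    fun s a b => ((hident s).comp (meas_pi2 a b)).integral_eq.trans (hcov a b)
  have hGint : ∀ (s s' : Fin tout) (a b c d : Fin n),
      Integrable (fun ω => X ω a s * X ω b s * X ω c s' * X ω d s') μ := by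
    intro s s' a b c d
    by_cases hss : s = s'
    · subst hss; exact hXint4 s a b c d
    · have hind : IndepFun (fun ω => X ω a s * X ω b s) (fun ω => X ω c s' * X ω d s') μ :=
        (hindep.indepFun hss).comp (meas_pi2 a b) (meas_pi2 c d)
      exact (hind.integrable_mul (hXint2 s a b) (hXint2 s' c d)).congr
        (ae_of_all _ fun ω => by simp only [Pi.mul_apply]; ring)
  have hGeq : ∀ (s s' : Fin tout) (a b c d : Fin n),
      ∫ ω, X ω a s * X ω b s * X ω c s' * X ω d s' ∂μ
        = if s = s' then
            γ * ((if a = b then (1:ℝ) else 0) * (if c = d then (1:ℝ) else 0)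
              + (if a = c then (1:ℝ) else 0) * (if b = d then (1:ℝ) else 0)
              + (if a = d then (1:ℝ) else 0) * (if b = c then (1:ℝ) else 0))
          else (if a = b then (1:ℝ) else 0) * (if c = d then (1:ℝ) else 0) := by
    intro s s' a b c d
    by_cases hss : s = s'
    · subst hss
      rw [if_pos rfl, hXeq4 s a b c d, Mtensor hn hξmeas hrot hmom4 γ hγ a b c d]
    · rw [if_neg hss]
      have hind : IndepFun (fun ω => X ω a s * X ω b s) (fun ω => X ω c s' * X ω d s') μ :=
        (hindep.indepFun hss).comp (meas_pi2 a b) (meas_pi2 c d)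
      have hm1 : Measurable (fun ω => X ω a s * X ω b s) :=
        ((hmX a s).comp hXmeas).mul ((hmX b s).comp hXmeas)
      have hm2 : Measurable (fun ω => X ω c s' * X ω d s') :=
        ((hmX c s').comp hXmeas).mul ((hmX d s').comp hXmeas)
      calc ∫ ω, X ω a s * X ω b s * X ω c s' * X ω d s' ∂μ
          = ∫ ω, (X ω a s * X ω b s) * (X ω c s' * X ω d s') ∂μ := by
            congr 1; funext ω; ring
        _ = (∫ ω, X ω a s * X ω b s ∂μ) * (∫ ω, X ω c s' * X ω d s' ∂μ) :=
            hind.integral_mul_eq_mul_integral hm1.aestronglyMeasurable hm2.aestronglyMeasurable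
        _ = (if a = b then (1:ℝ) else 0) * (if c = d then (1:ℝ) else 0) := by
            rw [hXeq2 s a b, hXeq2 s' c d]
  -- atoms
  have hatomInt : ∀ (i : Fin n) (s s' : Fin tout) (a b c d : Fin n),
      Integrable (fun ω => (u ω i a * u ω i b * u ω i c * u ω i d)
        * (X ω a s * X ω b s * X ω c s' * X ω d s')) μ := by
    intro i s s' a b c d
    refine (hGint s s' a b c d).bdd_mul
      ((hmF i a b c d).comp hVmeas).aestronglyMeasurable (c := K*K*K*K) (ae_of_all _ fun ω => ?_)
    rw [Real.norm_eq_abs]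
    exact hFabs ω i a b c d
  have hatomEq : ∀ (i : Fin n) (s s' : Fin tout) (a b c d : Fin n),
      ∫ ω, (u ω i a * u ω i b * u ω i c * u ω i d)
          * (X ω a s * X ω b s * X ω c s' * X ω d s') ∂μ
        = U i a b c d * (if s = s' then
            γ * ((if a = b then (1:ℝ) else 0) * (if c = d then (1:ℝ) else 0)
              + (if a = c then (1:ℝ) else 0) * (if b = d then (1:ℝ) else 0)
              + (if a = d then (1:ℝ) else 0) * (if b = c then (1:ℝ) else 0))
          else (if a = b then (1:ℝ) else 0) * (if c = d then (1:ℝ) else 0)) := by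
    intro i s s' a b c d
    have hind : IndepFun (fun ω => u ω i a * u ω i b * u ω i c * u ω i d)
        (fun ω => X ω a s * X ω b s * X ω c s' * X ω d s') μ :=
      hVX.comp (hmF i a b c d) (hmG s s' a b c d)
    rw [show (∫ ω, (u ω i a * u ω i b * u ω i c * u ω i d) * (X ω a s * X ω b s * X ω c s' * X ω d s') ∂μ)
        = (∫ ω, u ω i a * u ω i b * u ω i c * u ω i d ∂μ) * (∫ ω, X ω a s * X ω b s * X ω c s' * X ω d s' ∂μ) from
      hind.integral_mul_eq_mul_integral ((hmF i a b c d).comp hVmeas).aestronglyMeasurable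
      ((hmG s s' a b c d).comp hXmeas).aestronglyMeasurable, hGeq s s' a b c d]
  -- pointwise identities
  have hEentry : ∀ ω (i : Fin n), ((V ω)ᵀ * Eout ω * V ω) i i
      = (tout:ℝ)⁻¹ * ∑ s, (∑ p, u ω i p * X ω p s) * (∑ p, u ω i p * X ω p s) := by
    intro ω i
    have h1 : (V ω)ᵀ * Eout ω * V ω
        = (tout:ℝ)⁻¹ • ((V ω)ᵀ * (R * X ω * (X ω)ᵀ * R) * V ω) := by
      rw [hEout ω, Matrix.mul_smul, Matrix.smul_mul]
    rw [h1, Matrix.smul_apply, smul_eq_mul, quadE R (V ω) (X ω) hRT i]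
  have hSentry : ∀ ω (i : Fin n), ((V ω)ᵀ * S * V ω) i i = ∑ p, u ω i p * u ω i p :=
    fun ω i => quadS S R (V ω) hRS hRT i
  have key1 : ∀ ω, tau n ((diagPart n ((V ω)ᵀ * Eout ω * V ω)) ^ 2)
      = ((1:ℝ)/(n:ℝ)) * ((tout:ℝ)⁻¹ * (tout:ℝ)⁻¹) *
        ∑ i, ∑ s, ∑ s', ∑ a, ∑ b, ∑ c, ∑ d,
          (u ω i a * u ω i b * u ω i c * u ω i d)
            * (X ω a s * X ω b s * X ω c s' * X ω d s') := by
    intro ω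
    rw [tau_diagPart_sq]
    have e1 : ∀ i : Fin n, (((V ω)ᵀ * Eout ω * V ω) i i) * (((V ω)ᵀ * Eout ω * V ω) i i)
        = ((tout:ℝ)⁻¹ * (tout:ℝ)⁻¹) * ∑ s, ∑ s', ∑ a, ∑ b, ∑ c, ∑ d,
            (u ω i a * u ω i b * u ω i c * u ω i d)
              * (X ω a s * X ω b s * X ω c s' * X ω d s') := by
      intro i
      rw [hEentry ω i]
      have e2 : (∑ s, (∑ p, u ω i p * X ω p s) * (∑ p, u ω i p * X ω p s))
          * (∑ s, (∑ p, u ω i p * X ω p s) * (∑ p, u ω i p * X ω p s))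
          = ∑ s, ∑ s', ∑ a, ∑ b, ∑ c, ∑ d,
            (u ω i a * u ω i b * u ω i c * u ω i d)
              * (X ω a s * X ω b s * X ω c s' * X ω d s') := by
        rw [Finset.sum_mul_sum]
        refine Finset.sum_congr rfl fun s _ => Finset.sum_congr rfl fun s' _ => ?_
        rw [sum_sq_expand (fun p => u ω i p * X ω p s) (fun p => u ω i p * X ω p s')]
        exact Finset.sum_congr rfl fun a _ => Finset.sum_congr rfl fun b _ =>
          Finset.sum_congr rfl fun c _ => Finset.sum_congr rfl fun d _ => by ring
      calc ((tout:ℝ)⁻¹ * ∑ s, (∑ p, u ω i p * X ω p s) * (∑ p, u ω i p * X ω p s))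
            * ((tout:ℝ)⁻¹ * ∑ s, (∑ p, u ω i p * X ω p s) * (∑ p, u ω i p * X ω p s))
          = ((tout:ℝ)⁻¹ * (tout:ℝ)⁻¹)
            * ((∑ s, (∑ p, u ω i p * X ω p s) * (∑ p, u ω i p * X ω p s))
              * (∑ s, (∑ p, u ω i p * X ω p s) * (∑ p, u ω i p * X ω p s))) := by ring
        _ = _ := by rw [e2]
    rw [Finset.sum_congr rfl fun i _ => e1 i, ← Finset.mul_sum, ← mul_assoc]
  have key2 : ∀ ω, tau n ((diagPart n ((V ω)ᵀ * S * V ω)) ^ 2)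
      = ((1:ℝ)/(n:ℝ)) * ∑ i, ∑ a, ∑ c, (u ω i a * u ω i a) * (u ω i c * u ω i c) := by
    intro ω
    rw [tau_diagPart_sq]
    congr 1
    refine Finset.sum_congr rfl fun i _ => ?_
    rw [hSentry ω i, Finset.sum_mul_sum]

  -- integrate the grand sum
  have hswap7 : ∫ ω, (∑ i, ∑ s, ∑ s', ∑ a, ∑ b, ∑ c, ∑ d,
      (u ω i a * u ω i b * u ω i c * u ω i d)
        * (X ω a s * X ω b s * X ω c s' * X ω d s')) ∂μ
      = ∑ i : Fin n, ∑ s : Fin tout, ∑ s' : Fin tout, ∑ a : Fin n, ∑ b : Fin n, ∑ c : Fin n, ∑ d : Fin n,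
          U i a b c d * (if s = s' then
            γ * ((if a = b then (1:ℝ) else 0) * (if c = d then (1:ℝ) else 0)
              + (if a = c then (1:ℝ) else 0) * (if b = d then (1:ℝ) else 0)
              + (if a = d then (1:ℝ) else 0) * (if b = c then (1:ℝ) else 0))
          else (if a = b then (1:ℝ) else 0) * (if c = d then (1:ℝ) else 0)) := by
    rw [integral_finset_sum _ (fun i _ => integrable_finset_sum _ fun s _ =>
      integrable_finset_sum _ fun s' _ => integrable_finset_sum _ fun a _ =>
      integrable_finset_sum _ fun b _ => integrable_finset_sum _ fun c _ =>
      integrable_finset_sum _ fun d _ => hatomInt i s s' a b c d)]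
    refine Finset.sum_congr rfl fun i _ => ?_
    rw [integral_finset_sum _ (fun s _ =>
      integrable_finset_sum _ fun s' _ => integrable_finset_sum _ fun a _ =>
      integrable_finset_sum _ fun b _ => integrable_finset_sum _ fun c _ =>
      integrable_finset_sum _ fun d _ => hatomInt i s s' a b c d)]
    refine Finset.sum_congr rfl fun s _ => ?_
    rw [integral_finset_sum _ (fun s' _ => integrable_finset_sum _ fun a _ =>
      integrable_finset_sum _ fun b _ => integrable_finset_sum _ fun c _ =>
      integrable_finset_sum _ fun d _ => hatomInt i s s' a b c d)]
    refine Finset.sum_congr rfl fun s' _ => ?_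
    rw [integral_finset_sum _ (fun a _ =>
      integrable_finset_sum _ fun b _ => integrable_finset_sum _ fun c _ =>
      integrable_finset_sum _ fun d _ => hatomInt i s s' a b c d)]
    refine Finset.sum_congr rfl fun a _ => ?_
    rw [integral_finset_sum _ (fun b _ => integrable_finset_sum _ fun c _ =>
      integrable_finset_sum _ fun d _ => hatomInt i s s' a b c d)]
    refine Finset.sum_congr rfl fun b _ => ?_
    rw [integral_finset_sum _ (fun c _ =>
      integrable_finset_sum _ fun d _ => hatomInt i s s' a b c d)]
    refine Finset.sum_congr rfl fun c _ => ?_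
    rw [integral_finset_sum _ (fun d _ => hatomInt i s s' a b c d)]
    exact Finset.sum_congr rfl fun d _ => hatomEq i s s' a b c d
  -- collapse the delta sums
  have hinner : ∀ (i : Fin n) (s s' : Fin tout),
      (∑ a : Fin n, ∑ b : Fin n, ∑ c : Fin n, ∑ d : Fin n, U i a b c d * (if s = s' then
            γ * ((if a = b then (1:ℝ) else 0) * (if c = d then (1:ℝ) else 0)
              + (if a = c then (1:ℝ) else 0) * (if b = d then (1:ℝ) else 0)
              + (if a = d then (1:ℝ) else 0) * (if b = c then (1:ℝ) else 0))
          else (if a = b then (1:ℝ) else 0) * (if c = d then (1:ℝ) else 0)))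
      = if s = s' then 3 * γ * (∑ a, ∑ c, U i a a c c) else (∑ a, ∑ c, U i a a c c) := by
    intro i s s'
    by_cases hss : s = s'
    · simp only [if_pos hss]
      have e : ∀ a b c d : Fin n, U i a b c d *
          (γ * ((if a = b then (1:ℝ) else 0) * (if c = d then (1:ℝ) else 0)
              + (if a = c then (1:ℝ) else 0) * (if b = d then (1:ℝ) else 0)
              + (if a = d then (1:ℝ) else 0) * (if b = c then (1:ℝ) else 0)))
          = γ * (U i a b c d * ((if a = b then (1:ℝ) else 0) * (if c = d then (1:ℝ) else 0)))
            + (γ * (U i a b c d * ((if a = c then (1:ℝ) else 0) * (if b = d then (1:ℝ) else 0)))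
            + γ * (U i a b c d * ((if a = d then (1:ℝ) else 0) * (if b = c then (1:ℝ) else 0)))) := by
        intro a b c d; ring
      rw [Finset.sum_congr rfl fun a _ => Finset.sum_congr rfl fun b _ =>
        Finset.sum_congr rfl fun c _ => Finset.sum_congr rfl fun d _ => e a b c d]
      simp only [Finset.sum_add_distrib, ← Finset.mul_sum]
      rw [collapse1 (U i), collapse2 (U i), collapse3 (U i),
        Finset.sum_congr rfl fun a _ => Finset.sum_congr rfl fun b _ => hUsym2 i a b,
        Finset.sum_congr rfl fun a _ => Finset.sum_congr rfl fun b _ => hUsym3 i a b]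
      ring
    · simp only [if_neg hss]
      exact collapse1 (U i)
  -- left-hand side
  have hLHS : ∫ ω, tau n ((diagPart n ((V ω)ᵀ * Eout ω * V ω)) ^ 2) ∂μ
      = ((1:ℝ)/(n:ℝ)) * ((tout:ℝ)⁻¹ * (tout:ℝ)⁻¹)
        * ((3 * γ * (tout:ℝ) + ((tout:ℝ) * (tout:ℝ) - (tout:ℝ)))
          * ∑ i, ∑ a, ∑ c, U i a a c c) := by
    calc ∫ ω, tau n ((diagPart n ((V ω)ᵀ * Eout ω * V ω)) ^ 2) ∂μ
        = ∫ ω, ((1:ℝ)/(n:ℝ)) * ((tout:ℝ)⁻¹ * (tout:ℝ)⁻¹) *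
            (∑ i, ∑ s, ∑ s', ∑ a, ∑ b, ∑ c, ∑ d,
              (u ω i a * u ω i b * u ω i c * u ω i d)
                * (X ω a s * X ω b s * X ω c s' * X ω d s')) ∂μ := by
          simp only [key1]
      _ = ((1:ℝ)/(n:ℝ)) * ((tout:ℝ)⁻¹ * (tout:ℝ)⁻¹) *
            ∫ ω, (∑ i, ∑ s, ∑ s', ∑ a, ∑ b, ∑ c, ∑ d,
              (u ω i a * u ω i b * u ω i c * u ω i d)
                * (X ω a s * X ω b s * X ω c s' * X ω d s')) ∂μ := by
          rw [integral_const_mul]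
      _ = ((1:ℝ)/(n:ℝ)) * ((tout:ℝ)⁻¹ * (tout:ℝ)⁻¹) *
            ∑ i : Fin n, ∑ s : Fin tout, ∑ s' : Fin tout, ∑ a : Fin n, ∑ b : Fin n, ∑ c : Fin n, ∑ d : Fin n,
              U i a b c d * (if s = s' then
                γ * ((if a = b then (1:ℝ) else 0) * (if c = d then (1:ℝ) else 0)
                  + (if a = c then (1:ℝ) else 0) * (if b = d then (1:ℝ) else 0)
                  + (if a = d then (1:ℝ) else 0) * (if b = c then (1:ℝ) else 0))
              else (if a = b then (1:ℝ) else 0) * (if c = d then (1:ℝ) else 0)) := by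
          rw [hswap7]
      _ = ((1:ℝ)/(n:ℝ)) * ((tout:ℝ)⁻¹ * (tout:ℝ)⁻¹) *
            ∑ i, ((tout:ℝ) * (3 * γ * (∑ a, ∑ c, U i a a c c))
              + ((tout:ℝ) * (tout:ℝ) - (tout:ℝ)) * (∑ a, ∑ c, U i a a c c)) := by
          rw [Finset.sum_congr rfl fun i (_ : i ∈ Finset.univ) => by
            rw [Finset.sum_congr rfl fun s (_ : s ∈ Finset.univ) =>
              Finset.sum_congr rfl fun s' (_ : s' ∈ Finset.univ) => hinner i s s',
              sum_if_diag]]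
      _ = ((1:ℝ)/(n:ℝ)) * ((tout:ℝ)⁻¹ * (tout:ℝ)⁻¹)
        * ((3 * γ * (tout:ℝ) + ((tout:ℝ) * (tout:ℝ) - (tout:ℝ)))
          * ∑ i, ∑ a, ∑ c, U i a a c c) := by
          rw [Finset.sum_congr rfl fun i (_ : i ∈ Finset.univ) =>
            (by ring : ((tout:ℝ) * (3 * γ * (∑ a, ∑ c, U i a a c c))
              + ((tout:ℝ) * (tout:ℝ) - (tout:ℝ)) * (∑ a, ∑ c, U i a a c c))
              = (3 * γ * (tout:ℝ) + ((tout:ℝ) * (tout:ℝ) - (tout:ℝ)))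
                * (∑ a, ∑ c, U i a a c c)), ← Finset.mul_sum]
  -- right-hand side
  have hRHS : ∫ ω, tau n ((diagPart n ((V ω)ᵀ * S * V ω)) ^ 2) ∂μ
      = ((1:ℝ)/(n:ℝ)) * ∑ i, ∑ a, ∑ c, U i a a c c := by
    have hint2 : ∀ (i a c : Fin n),
        Integrable (fun ω => (u ω i a * u ω i a) * (u ω i c * u ω i c)) μ :=
      fun i a c => (hintU i a a c c).congr (ae_of_all _ fun ω => by ring)
    calc ∫ ω, tau n ((diagPart n ((V ω)ᵀ * S * V ω)) ^ 2) ∂μ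
        = ∫ ω, ((1:ℝ)/(n:ℝ)) * ∑ i, ∑ a, ∑ c,
            (u ω i a * u ω i a) * (u ω i c * u ω i c) ∂μ := by simp only [key2]
      _ = ((1:ℝ)/(n:ℝ)) * ∫ ω, (∑ i, ∑ a, ∑ c,
            (u ω i a * u ω i a) * (u ω i c * u ω i c)) ∂μ := by rw [integral_const_mul]
      _ = ((1:ℝ)/(n:ℝ)) * ∑ i, ∑ a, ∑ c, U i a a c c := by
          rw [integral_finset_sum _ (fun i _ => integrable_finset_sum _ fun a _ =>
            integrable_finset_sum _ fun c _ => hint2 i a c)]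
          congr 1
          refine Finset.sum_congr rfl fun i _ => ?_
          rw [integral_finset_sum _ (fun a _ =>
            integrable_finset_sum _ fun c _ => hint2 i a c)]
          refine Finset.sum_congr rfl fun a _ => ?_
          rw [integral_finset_sum _ (fun c _ => hint2 i a c)]
          refine Finset.sum_congr rfl fun c _ => ?_
          simp only [hU]
          congr 1; funext ω; ring
  rw [hLHS, hRHS]
  field_simp
  ring
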